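/- Let F : 𝒜 ⥤ ℬ be a lax monoidal functor between symmetric Picard categories, with unit morphism F⁰ : 𝟙 ⟶ F𝟙 and structure morphisms F²_{x,y} : Fx ⊗ Fy ⟶ F(x ⊗ y). For every object a of 𝒜 there exists a unique morphism c^F_a : (Fa)^• ⟶ F(a^•) such that j_{Fa} ≫ (c^F_a ⊗ 𝟙_{Fa}) ≫ F²_{a^•,a} = F⁰ ≫ F(j_a). Moreover each c^F_a is an isomorphism, and the family is natural: for every morphism f : a ⟶ b of 𝒜, (Ff)^• ≫ c^F_a = c^F_b ≫ F(f^•). -/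

import Mathlib

open CategoryTheory Category MonoidalCategory

universe v u

/-- A symmetric Picard category: a symmetric monoidal groupoid equipped with, for every
object `a`, a chosen object `dual a` and a chosen isomorphism `j a : 𝟙_ C ≅ dual a ⊗ a`. -/
class SymmetricPicard (C : Type u) [Groupoid.{v} C] [MonoidalCategory C]
    [SymmetricCategory C] where
  dual : C → C
  j : ∀ a : C, 𝟙_ C ≅ dual a ⊗ a

namespace SymmetricPicard

variable {C : Type u} [Groupoid.{v} C] [MonoidalCategory C] [SymmetricCategory C]
  [SymmetricPicard C]

/-- The dual of a morphism `f : a ⟶ b`: the unique morphism `g : dual b ⟶ dual a`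
such that `(j b).hom ≫ (g ⊗ₘ inv f) = (j a).hom`. -/
noncomputable def dualHom {a b : C} (f : a ⟶ b) : dual b ⟶ dual a :=
  @Classical.epsilon _
    ⟨(ρ_ (dual b)).inv ≫ (dual b ◁ (j a).hom) ≫ (dual b ◁ (dual a ◁ f)) ≫
      (α_ (dual b) (dual a) b).inv ≫ ((β_ (dual b) (dual a)).hom ▷ b) ≫
      (α_ (dual a) (dual b) b).hom ≫ (dual a ◁ (j b).inv) ≫ (ρ_ (dual a)).hom⟩
    (fun g => (j b).hom ≫ (g ⊗ₘ inv f) = (j a).hom)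

/-- The canonical pairing `(a^• ⊗ b^•) ⊗ (b ⊗ a) ⟶ 𝟙`. -/
noncomputable def pairing (a b : C) : (dual a ⊗ dual b) ⊗ (b ⊗ a) ⟶ 𝟙_ C :=
  (α_ (dual a) (dual b) (b ⊗ a)).hom ≫ (𝟙 (dual a) ⊗ₘ (α_ (dual b) b a).inv) ≫
    (𝟙 (dual a) ⊗ₘ ((j b).inv ⊗ₘ 𝟙 a)) ≫ (𝟙 (dual a) ⊗ₘ (λ_ a).hom) ≫ (j a).inv

/-- Laplaza's canonical arrow `κ_{a,b} : a^• ⊗ b^• ⟶ (b ⊗ a)^•`: the unique morphism `f`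
such that `(f ⊗ 𝟙_{b⊗a}) ≫ j_{b⊗a}⁻¹` is the canonical pairing. -/
noncomputable def kappa (a b : C) : dual a ⊗ dual b ⟶ dual (b ⊗ a) :=
  @Classical.epsilon _
    ⟨(ρ_ (dual a ⊗ dual b)).inv ≫ ((dual a ⊗ dual b) ◁ (j (b ⊗ a)).hom) ≫
      ((dual a ⊗ dual b) ◁ (β_ (dual (b ⊗ a)) (b ⊗ a)).hom) ≫
      (α_ (dual a ⊗ dual b) (b ⊗ a) (dual (b ⊗ a))).inv ≫
      (pairing a b ▷ dual (b ⊗ a)) ≫ (λ_ (dual (b ⊗ a))).hom⟩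
    (fun f => (f ⊗ₘ 𝟙 (b ⊗ a)) ≫ (j (b ⊗ a)).inv = pairing a b)


/-- Auxiliary retraction for right whiskering by `a`. -/
noncomputable def rmap {x y : C} (a : C) (h : x ⊗ a ⟶ y ⊗ a) : x ⟶ y :=
  (ρ_ x).inv ≫ (x ◁ ((j a).hom ≫ (β_ (dual a) a).hom)) ≫ (α_ x a (dual a)).inv ≫
    (h ▷ dual a) ≫ (α_ y a (dual a)).hom ≫
    (y ◁ ((β_ a (dual a)).hom ≫ (j a).inv)) ≫ (ρ_ y).hom

lemma rmap_whiskerRight {x y : C} (a : C) (g : x ⟶ y) : rmap a (g ▷ a) = g := by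
  simp only [rmap, MonoidalCategory.whiskerLeft_comp, assoc]
  rw [← associator_inv_naturality_left_assoc, whisker_exchange_assoc,
    whisker_exchange_assoc]
  rw [Iso.inv_hom_id_assoc,
    ← MonoidalCategory.whiskerLeft_comp_assoc y (β_ (dual a) a).hom,
    SymmetricCategory.symmetry]
  simp

lemma whiskerRight_injective (a : C) {x y : C} {g g' : x ⟶ y}
    (h : g ▷ a = g' ▷ a) : g = g' := by
  rw [← rmap_whiskerRight a g, h, rmap_whiskerRight]

lemma rmap_injective (a : C) {x y : C} {h h' : x ⊗ a ⟶ y ⊗ a}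
    (e : rmap a h = rmap a h') : h = h' := by
  apply whiskerRight_injective (dual a)
  simp only [rmap, assoc] at e
  rw [cancel_epi, cancel_epi, cancel_epi] at e
  rw [← cancel_mono ((α_ y a (dual a)).hom ≫
    (y ◁ ((β_ a (dual a)).hom ≫ (j a).inv)) ≫ (ρ_ y).hom)]
  simpa [assoc] using e

lemma whiskerRight_rmap {x y : C} (a : C) (h : x ⊗ a ⟶ y ⊗ a) :
    rmap a h ▷ a = h :=
  rmap_injective a (rmap_whiskerRight a (rmap a h))

lemma dualHom_spec {a b : C} (f : a ⟶ b) :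
    (j b).hom ≫ (dualHom f ⊗ₘ inv f) = (j a).hom := by
  have hex : ∃ g : dual b ⟶ dual a, (j b).hom ≫ (g ⊗ₘ inv f) = (j a).hom := by
    refine ⟨rmap b ((j b).inv ≫ (j a).hom ≫ (dual a ◁ f)), ?_⟩
    rw [MonoidalCategory.tensorHom_def, whiskerRight_rmap]
    simp [← MonoidalCategory.whiskerLeft_comp]
  exact Classical.epsilon_spec hex

lemma dualHom_whisker {a b : C} (f : a ⟶ b) :
    (j b).hom ≫ (dualHom f ▷ b) = (j a).hom ≫ (dual a ◁ f) := by
  have h := dualHom_spec f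
  rw [MonoidalCategory.tensorHom_def] at h
  rw [← h, assoc, assoc, ← MonoidalCategory.whiskerLeft_comp,
    IsIso.inv_hom_id, MonoidalCategory.whiskerLeft_id, comp_id]

open Functor.LaxMonoidal

universe v₁ u₁ v₂ u₂

/-- For a lax monoidal functor `F` between symmetric Picard categories, with unit morphism
`ε F` and structure morphisms `μ F x y`, for every object `a` there is a unique morphism
`c : (Fa)^• ⟶ F(a^•)` with `j_{Fa} ≫ (c ⊗ 𝟙_{Fa}) ≫ μ F a^• a = ε F ≫ F(j_a)`; moreover
any such `c` is an isomorphism, and the family is natural: `(Ff)^• ≫ c_a = c_b ≫ F(f^•)`. -/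
theorem statement8 {A : Type u₁} [Groupoid.{v₁} A] [MonoidalCategory A]
    [SymmetricCategory A] [SymmetricPicard A]
    {B : Type u₂} [Groupoid.{v₂} B] [MonoidalCategory B]
    [SymmetricCategory B] [SymmetricPicard B]
    (F : A ⥤ B) [F.LaxMonoidal] :
    (∀ a : A, ∃! c : dual (F.obj a) ⟶ F.obj (dual a),
        (j (F.obj a)).hom ≫ (c ⊗ₘ 𝟙 (F.obj a)) ≫ μ F (dual a) a = ε F ≫ F.map (j a).hom) ∧
    (∀ (a : A) (c : dual (F.obj a) ⟶ F.obj (dual a)),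
        (j (F.obj a)).hom ≫ (c ⊗ₘ 𝟙 (F.obj a)) ≫ μ F (dual a) a = ε F ≫ F.map (j a).hom →
        IsIso c) ∧
    (∀ {a b : A} (f : a ⟶ b)
        (ca : dual (F.obj a) ⟶ F.obj (dual a)) (cb : dual (F.obj b) ⟶ F.obj (dual b)),
        (j (F.obj a)).hom ≫ (ca ⊗ₘ 𝟙 (F.obj a)) ≫ μ F (dual a) a = ε F ≫ F.map (j a).hom →
        (j (F.obj b)).hom ≫ (cb ⊗ₘ 𝟙 (F.obj b)) ≫ μ F (dual b) b = ε F ≫ F.map (j b).hom →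
        dualHom (F.map f) ≫ ca = cb ≫ F.map (dualHom f)) := by
  refine ⟨fun a => ?_, fun a c hc => inferInstance, fun {a b} f ca cb ha hb => ?_⟩
  · -- existence and uniqueness
    refine ⟨rmap (F.obj a) ((j (F.obj a)).inv ≫ ε F ≫ F.map (j a).hom ≫
        inv (μ F (dual a) a)), ?_, ?_⟩
    · dsimp only
      rw [tensorHom_id, whiskerRight_rmap]
      simp
    · intro c' h'
      have h0 : (j (F.obj a)).hom ≫
          (rmap (F.obj a) ((j (F.obj a)).inv ≫ ε F ≫ F.map (j a).hom ≫
            inv (μ F (dual a) a)) ⊗ₘ 𝟙 (F.obj a)) ≫ μ F (dual a) a =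
          ε F ≫ F.map (j a).hom := by
        rw [tensorHom_id, whiskerRight_rmap]
        simp
      have e := h'.trans h0.symm
      rw [cancel_epi, cancel_mono, tensorHom_id, tensorHom_id] at e
      exact whiskerRight_injective (F.obj a) e
  · -- naturality
    rw [tensorHom_id] at ha hb
    have hD := dualHom_whisker (F.map f)
    have hd := dualHom_whisker f
    apply whiskerRight_injective (F.obj b)
    rw [← cancel_epi (j (F.obj b)).hom, ← cancel_mono (μ F (dual a) b)]
    simp only [assoc]
    calc (j (F.obj b)).hom ≫ ((dualHom (F.map f) ≫ ca) ▷ F.obj b) ≫ μ F (dual a) b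
        = (j (F.obj b)).hom ≫ (dualHom (F.map f) ▷ F.obj b) ≫ (ca ▷ F.obj b) ≫
            μ F (dual a) b := by simp [comp_whiskerRight]
      _ = (j (F.obj a)).hom ≫ (dual (F.obj a) ◁ F.map f) ≫ (ca ▷ F.obj b) ≫
            μ F (dual a) b := by rw [reassoc_of% hD]
      _ = (j (F.obj a)).hom ≫ (ca ▷ F.obj a) ≫ (F.obj (dual a) ◁ F.map f) ≫
            μ F (dual a) b := by rw [whisker_exchange_assoc]
      _ = (j (F.obj a)).hom ≫ (ca ▷ F.obj a) ≫ μ F (dual a) a ≫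
            F.map (dual a ◁ f) := by rw [μ_natural_right]
      _ = ε F ≫ F.map (j a).hom ≫ F.map (dual a ◁ f) := by rw [reassoc_of% ha]
      _ = ε F ≫ F.map ((j a).hom ≫ dual a ◁ f) := by rw [F.map_comp]
      _ = ε F ≫ F.map ((j b).hom ≫ dualHom f ▷ b) := by rw [hd]
      _ = ε F ≫ F.map (j b).hom ≫ F.map (dualHom f ▷ b) := by simp
      _ = (j (F.obj b)).hom ≫ (cb ▷ F.obj b) ≫ μ F (dual b) b ≫
            F.map (dualHom f ▷ b) := by rw [reassoc_of% hb]
      _ = (j (F.obj b)).hom ≫ (cb ▷ F.obj b) ≫ (F.map (dualHom f) ▷ F.obj b) ≫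
            μ F (dual a) b := by rw [← μ_natural_left]
      _ = (j (F.obj b)).hom ≫ ((cb ≫ F.map (dualHom f)) ▷ F.obj b) ≫
            μ F (dual a) b := by simp [comp_whiskerRight]


end SymmetricPicard
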